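/- Let m > n be relatively prime positive integers with m odd, and suppose m is not a perfect cube. Set r = n·(m−n) and s = m·(m+n). Then there is no rational number x satisfying s·(x² − r²) = 2·x³. -/

import Mathlib

lemma cube_of_dvd_factorization {m : ℕ} (hm : m ≠ 0) (h : ∀ p, 3 ∣ m.factorization p) :
    ∃ k, m = k ^ 3 := by
  refine ⟨m.factorization.prod fun p e => p ^ (e / 3), ?_⟩
  rw [Finsupp.prod, ← Finset.prod_pow]
  conv_lhs => rw [← Nat.factorization_prod_pow_eq_self hm]
  rw [Finsupp.prod]
  refine Finset.prod_congr rfl fun p hp => ?_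
  rw [← pow_mul, Nat.div_mul_cancel (h p)]

theorem no_two_torsion_odd (m n : ℕ) (hmn : n < m) (hn : 0 < n)
    (hcop : Nat.Coprime m n) (hmo : Odd m)
    (hcube : ¬ ∃ k : ℕ, m = k ^ 3) :
    ¬ ∃ x : ℚ, (m * (m + n) : ℚ) * (x ^ 2 - (n * (m - n) : ℕ) ^ 2) = 2 * x ^ 3 := by
  rintro ⟨x, hx⟩
  set R : ℕ := n * (m - n) with hR
  have hmpos : 0 < m := hn.trans hmn
  have hRpos : 0 < R := Nat.mul_pos hn (Nat.sub_pos_of_lt hmn)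
  have hx0 : x ≠ 0 := by
    rintro rfl
    have h1 : (0:ℚ) < m := by exact_mod_cast hmpos
    have h2 : (0:ℚ) < R := by exact_mod_cast hRpos
    have h3 : (0:ℚ) ≤ n := n.cast_nonneg
    nlinarith [mul_pos (mul_pos h1 (by linarith : (0:ℚ) < (m:ℚ) + n)) (pow_pos h2 2)]
  set a : ℤ := x.num with ha
  set B : ℕ := x.den with hB
  have ha0 : a ≠ 0 := Rat.num_ne_zero.mpr hx0
  have hB0 : B ≠ 0 := x.den_nz
  have hbQ : ((B : ℤ) : ℚ) ≠ 0 := by exact_mod_cast hB0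
  have keyQ : (2 * a ^ 3 : ℚ) = ((m * (m + n) : ℕ) : ℚ) * B * (a ^ 2 - (R : ℚ) ^ 2 * B ^ 2) := by
    have hxab : x = (a : ℚ) / (B : ℚ) := (Rat.num_div_den x).symm
    rw [hxab] at hx
    field_simp at hx
    refine mul_right_cancel₀ (pow_ne_zero 2 hbQ) ?_
    push_cast
    linear_combination -((B:ℚ))^2 * hx
  have key : 2 * a ^ 3 = ((m * (m + n) : ℕ) : ℤ) * (B : ℤ) * (a ^ 2 - (R : ℤ) ^ 2 * (B : ℤ) ^ 2) := by
    exact_mod_cast keyQ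
  set D : ℤ := a ^ 2 - (R : ℤ) ^ 2 * (B : ℤ) ^ 2 with hD
  have main : ∀ p, 3 ∣ m.factorization p := by
    intro p
    by_cases hp : p.Prime
    swap
    · simp [Nat.factorization_eq_zero_of_not_prime _ hp]
    by_cases hpm : p ∣ m
    swap
    · simp [Nat.factorization_eq_zero_of_not_dvd hpm]
    have hp2 : p ≠ 2 := by
      rintro rfl
      exact (Nat.not_even_iff_odd.mpr hmo) ((even_iff_two_dvd).mpr hpm)
    have hpZ : Prime (p : ℤ) := Nat.prime_iff_prime_int.mp hp
    have hpn : ¬ p ∣ n := fun h => hp.one_lt.ne' (Nat.eq_one_of_dvd_coprimes hcop hpm h)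
    -- p ∣ a
    have hpa : (p : ℤ) ∣ a := by
      have h1 : (p : ℤ) ∣ 2 * a ^ 3 := by
        rw [key]
        exact dvd_mul_of_dvd_left (dvd_mul_of_dvd_left
          (Int.natCast_dvd_natCast.mpr (hpm.mul_right _)) _) _
      have h2 : ¬ (p : ℤ) ∣ 2 := by
        have : ¬ p ∣ 2 := fun h => hp2 ((Nat.prime_dvd_prime_iff_eq hp Nat.prime_two).mp h)
        exact_mod_cast this
      rcases hpZ.dvd_mul.mp h1 with h | h
      · exact absurd h h2
      · exact hpZ.dvd_of_dvd_pow h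
    have hpB : ¬ p ∣ B := by
      intro h
      have h1 : p ∣ a.natAbs := Int.natCast_dvd.mp hpa
      exact hp.one_lt.ne' (Nat.eq_one_of_dvd_coprimes x.reduced h1 h)
    have hpmn : ¬ p ∣ (m + n) := fun h => hpn ((Nat.dvd_add_right hpm).mp h)
    have hpR : ¬ p ∣ R := by
      intro h
      rcases hp.dvd_mul.mp h with h | h
      · exact hpn h
      · exact hpn (by simpa [Nat.sub_sub_self hmn.le] using Nat.dvd_sub hpm h)
    have hpD : ¬ (p : ℤ) ∣ D := by
      intro h
      have h1 : (p : ℤ) ∣ (R : ℤ) ^ 2 * (B : ℤ) ^ 2 := by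
        have := dvd_sub (dvd_pow hpa two_ne_zero) h
        simpa [hD] using this
      rcases hpZ.dvd_mul.mp h1 with h2 | h2
      · exact hpR (Int.natCast_dvd_natCast.mp (hpZ.dvd_of_dvd_pow h2))
      · exact hpB (Int.natCast_dvd_natCast.mp (hpZ.dvd_of_dvd_pow h2))
    have hD0 : D ≠ 0 := fun h => hpD (h ▸ dvd_zero _)
    -- natAbs equation
    set A : ℕ := a.natAbs with hA
    have hA0 : A ≠ 0 := Int.natAbs_ne_zero.mpr ha0
    have hDn0 : D.natAbs ≠ 0 := Int.natAbs_ne_zero.mpr hD0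
    have keyN : 2 * A ^ 3 = (m * (m + n)) * B * D.natAbs := by
      have := congrArg Int.natAbs key
      simpa [Int.natAbs_mul, Int.natAbs_pow, show ((m:ℤ) + n).natAbs = m + n by omega] using this
    have hfac := congrArg (fun t : ℕ => t.factorization p) keyN
    simp only [Nat.factorization_mul (two_ne_zero) (pow_ne_zero 3 hA0),
      Nat.factorization_mul (mul_ne_zero (mul_ne_zero hmpos.ne' (Nat.add_pos_left hmpos n).ne') hB0) hDn0,
      Nat.factorization_mul (mul_ne_zero hmpos.ne' (Nat.add_pos_left hmpos n).ne') hB0,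
      Nat.factorization_mul hmpos.ne' (Nat.add_pos_left hmpos n).ne',
      Nat.factorization_pow, Finsupp.coe_add, Finsupp.coe_smul, Pi.add_apply, Pi.smul_apply,
      smul_eq_mul] at hfac
    have z2 : (Nat.factorization 2) p = 0 :=
      Nat.factorization_eq_zero_of_not_dvd (fun h => hp2 ((Nat.prime_dvd_prime_iff_eq hp Nat.prime_two).mp h))
    have zmn : (Nat.factorization (m + n)) p = 0 := Nat.factorization_eq_zero_of_not_dvd hpmn
    have zB : (Nat.factorization B) p = 0 := Nat.factorization_eq_zero_of_not_dvd hpB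
    have zD : (Nat.factorization D.natAbs) p = 0 :=
      Nat.factorization_eq_zero_of_not_dvd (fun h => hpD (Int.natCast_dvd.mpr h))
    exact ⟨A.factorization p, by omega⟩
  exact hcube (cube_of_dvd_factorization hmpos.ne' main)
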